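/- Let ν be a Lévy measure with continuous radial tail δ(r)=ν(|x|>r), w=1/δ O-regularly varying at zero and infinity with positive indices p1,q1,p2,q2, and ν̃_R(A)=w(R)ν(RA). Then for any α1 > max(q1,q2) and any 0 < α2 < min(p1,p2), there is C = C(w,α1,α2) > 0 such that ∫_{|y|≤1} |y|^{α1} ν̃_R(dy) + ∫_{|y|>1} |y|^{α2} ν̃_R(dy) ≤ C for all R>0. -/

import Mathlib

set_option maxHeartbeats 1600000

open Filter Topology Real MeasureTheory Set


private lemma chain_iter (w : ℝ → ℝ) (x θ s : ℝ) (hx : 0 < x) (n : ℕ)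
    (hstep : ∀ j < n, w (s * x ^ j * x) ≤ x ^ θ * w (s * x ^ j)) :
    w (s * x ^ n) ≤ x ^ (θ * n) * w s := by
  induction n with
  | zero => simp
  | succ n ih =>
    have h1 : w (s * x ^ (n + 1)) ≤ x ^ θ * w (s * x ^ n) := by
      have := hstep n (Nat.lt_succ_self n)
      rw [pow_succ, ← mul_assoc]
      exact this
    have h2 : w (s * x ^ n) ≤ x ^ (θ * n) * w s :=
      ih (fun j hj => hstep j (hj.trans (Nat.lt_succ_self n)))
    rw [show (θ * ((n + 1 : ℕ) : ℝ)) = θ * n + θ by push_cast; ring]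
    calc w (s * x ^ (n + 1)) ≤ x ^ θ * w (s * x ^ n) := h1
      _ ≤ x ^ θ * (x ^ (θ * n) * w s) := by
          have := Real.rpow_pos_of_pos hx θ
          nlinarith
      _ = x ^ (θ * n + θ) * w s := by
          rw [← mul_assoc, Real.rpow_add hx]; ring

/-- Upward Potter bound: from a multiplicative step bound valid on `[u,v]`,
get `w v ≤ x^θ (v/u)^θ w u`. -/
private lemma potter_up (w : ℝ → ℝ)
    (hw : ∀ a b : ℝ, 0 < a → a ≤ b → w a ≤ w b)
    (hwpos : ∀ r : ℝ, 0 < r → 0 < w r)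
    (x θ : ℝ) (hx : 1 < x) (hθ : 0 ≤ θ)
    (u v : ℝ) (hu : 0 < u) (huv : u ≤ v)
    (hstep : ∀ ε, u ≤ ε → ε ≤ v → w (ε * x) ≤ x ^ θ * w ε) :
    w v ≤ x ^ θ * (v / u) ^ θ * w u := by
  have hx0 : (0:ℝ) < x := lt_trans one_pos hx
  have hlx : 0 < Real.log x := Real.log_pos hx
  have hvu1 : 1 ≤ v / u := (one_le_div hu).mpr huv
  have hvu0 : 0 < v / u := lt_of_lt_of_le one_pos hvu1
  set t : ℝ := Real.log (v / u) with ht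
  have ht0 : 0 ≤ t := Real.log_nonneg hvu1
  set n : ℕ := ⌊t / Real.log x⌋₊ with hn
  have h1 : (n : ℝ) ≤ t / Real.log x := Nat.floor_le (div_nonneg ht0 hlx.le)
  have h2 : t / Real.log x < n + 1 := Nat.lt_floor_add_one _
  have hxn : x ^ n ≤ v / u := by
    have : (n : ℝ) * Real.log x ≤ t := (le_div_iff₀ hlx).mp h1
    calc x ^ n = Real.exp ((n : ℝ) * Real.log x) := by
          rw [← Real.log_rpow hx0, Real.exp_log (Real.rpow_pos_of_pos hx0 _),
            Real.rpow_natCast]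
      _ ≤ Real.exp t := Real.exp_le_exp.mpr this
      _ = v / u := by rw [ht, Real.exp_log hvu0]
  have hxn1 : v / u ≤ x ^ (n + 1) := by
    have : t ≤ ((n : ℝ) + 1) * Real.log x := by
      rw [div_lt_iff₀ hlx] at h2; linarith
    calc v / u = Real.exp t := by rw [ht, Real.exp_log hvu0]
      _ ≤ Real.exp (((n : ℝ) + 1) * Real.log x) := Real.exp_le_exp.mpr this
      _ = x ^ (n + 1) := by
          rw [← Real.log_rpow hx0, Real.exp_log (Real.rpow_pos_of_pos hx0 _)]
          rw [show ((n : ℝ) + 1) = ((n + 1 : ℕ) : ℝ) by push_cast; ring,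
            Real.rpow_natCast]
  have hchain : w (u * x ^ (n + 1)) ≤ x ^ (θ * (n + 1 : ℕ)) * w u := by
    apply chain_iter w x θ u hx0
    intro j hj
    apply hstep
    · nlinarith [pow_pos hx0 j, one_le_pow₀ hx.le (n := j)]
    · calc u * x ^ j ≤ u * x ^ n := by
            apply mul_le_mul_of_nonneg_left _ hu.le
            exact pow_le_pow_right₀ hx.le (Nat.le_of_lt_succ hj)
        _ ≤ u * (v / u) := mul_le_mul_of_nonneg_left hxn hu.le
        _ = v := by field_simp
  have hmono : w v ≤ w (u * x ^ (n + 1)) := by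
    apply hw v _ (lt_of_lt_of_le hu huv)
    calc v = u * (v / u) := by field_simp
      _ ≤ u * x ^ (n + 1) := mul_le_mul_of_nonneg_left hxn1 hu.le
  have hpow : x ^ (θ * (n + 1 : ℕ)) ≤ x ^ θ * (v / u) ^ θ := by
    have : x ^ (θ * (n + 1 : ℕ)) = x ^ θ * (x ^ n) ^ θ := by
      rw [← Real.rpow_natCast x n, ← Real.rpow_mul hx0.le,
        ← Real.rpow_add hx0]
      push_cast; ring_nf
    rw [this]
    have := Real.rpow_le_rpow (by positivity) hxn hθ
    nlinarith [Real.rpow_pos_of_pos hx0 θ]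
  calc w v ≤ w (u * x ^ (n + 1)) := hmono
    _ ≤ x ^ (θ * (n + 1 : ℕ)) * w u := hchain
    _ ≤ x ^ θ * (v / u) ^ θ * w u := by
        have := hwpos u hu
        nlinarith


/-- Downward Potter bound: step with ratio `x < 1`, valid for `ε ∈ [u, v]`,
gives `w u ≤ x^(-θ) (u/v)^θ w v`. -/
private lemma potter_dn (w : ℝ → ℝ)
    (hw : ∀ a b : ℝ, 0 < a → a ≤ b → w a ≤ w b)
    (hwpos : ∀ r : ℝ, 0 < r → 0 < w r)
    (x θ : ℝ) (hx0 : 0 < x) (hx : x < 1) (hθ : 0 ≤ θ)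
    (u v : ℝ) (hu : 0 < u) (huv : u ≤ v)
    (hstep : ∀ ε, u ≤ ε → ε ≤ v → w (ε * x) ≤ x ^ θ * w ε) :
    w u ≤ x ^ (-θ) * (u / v) ^ θ * w v := by
  have hv : 0 < v := lt_of_lt_of_le hu huv
  have hlx : 0 < -Real.log x := by
    have := Real.log_neg hx0 hx; linarith
  have hvu1 : 1 ≤ v / u := (one_le_div hu).mpr huv
  have hvu0 : 0 < v / u := lt_of_lt_of_le one_pos hvu1
  set t : ℝ := Real.log (v / u) with ht
  have ht0 : 0 ≤ t := Real.log_nonneg hvu1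
  set n : ℕ := ⌊t / (-Real.log x)⌋₊ with hn
  have h1 : (n : ℝ) ≤ t / (-Real.log x) := Nat.floor_le (div_nonneg ht0 hlx.le)
  have h2 : t / (-Real.log x) < n + 1 := Nat.lt_floor_add_one _
  -- u ≤ v * x^n  and  v * x^(n+1) ≤ u
  have hexp : ∀ m : ℕ, v * x ^ m = v * Real.exp ((m : ℝ) * Real.log x) := by
    intro m
    rw [← Real.log_rpow hx0, Real.exp_log (Real.rpow_pos_of_pos hx0 _),
      Real.rpow_natCast]
  have hun : u ≤ v * x ^ n := by
    have h1' : (n : ℝ) * (-Real.log x) ≤ t := (le_div_iff₀ hlx).mp h1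
    rw [hexp]
    have : u = v * Real.exp (-t) := by
      rw [ht, ← Real.log_inv, Real.exp_log (by positivity : (0:ℝ) < (v/u)⁻¹)]
      field_simp
    rw [this]
    have : Real.exp (-t) ≤ Real.exp ((n:ℝ) * Real.log x) :=
      Real.exp_le_exp.mpr (by nlinarith)
    nlinarith [Real.exp_pos (-t)]
  have hun1 : v * x ^ (n + 1) ≤ u := by
    have h2' : t < ((n : ℝ) + 1) * (-Real.log x) := (div_lt_iff₀ hlx).mp h2
    rw [hexp]
    have hu' : u = v * Real.exp (-t) := by
      rw [ht, ← Real.log_inv, Real.exp_log (by positivity : (0:ℝ) < (v/u)⁻¹)]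
      field_simp
    rw [hu']
    have : Real.exp (((n:ℝ)+1) * Real.log x) ≤ Real.exp (-t) := by
      apply Real.exp_le_exp.mpr; push_cast; nlinarith
    push_cast at this ⊢
    nlinarith [Real.exp_pos (((n:ℝ)+1) * Real.log x)]
  have hchain : w (v * x ^ n) ≤ x ^ (θ * n) * w v := by
    apply chain_iter w x θ v hx0
    intro j hj
    apply hstep
    · -- u ≤ v * x^j : since j ≤ n-1 < n, x^j ≥ x^n ≥ ... 
      calc u ≤ v * x ^ n := hun
        _ ≤ v * x ^ j := by
            apply mul_le_mul_of_nonneg_left _ hv.le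
            exact pow_le_pow_of_le_one hx0.le hx.le hj.le
    · calc v * x ^ j ≤ v * 1 := by
            apply mul_le_mul_of_nonneg_left _ hv.le
            exact pow_le_one₀ hx0.le hx.le
        _ = v := mul_one v
  have hmono : w u ≤ w (v * x ^ n) := hw u _ hu hun
  have hpow : x ^ (θ * n) ≤ x ^ (-θ) * (u / v) ^ θ := by
    have he : x ^ (θ * n) = (x ^ n) ^ θ := by
      rw [← Real.rpow_natCast x n, ← Real.rpow_mul hx0.le]; ring_nf
    have hxn : x ^ n ≤ u / v * x⁻¹ := by
      have h : x ^ n * x ≤ u / v := by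
        rw [← pow_succ, le_div_iff₀ hv]
        nlinarith [hun1]
      calc x ^ n = x ^ n * x * x⁻¹ := by field_simp
        _ ≤ u / v * x⁻¹ := mul_le_mul_of_nonneg_right h (by positivity)
    calc x ^ (θ * n) = (x ^ n) ^ θ := he
      _ ≤ (u / v * x⁻¹) ^ θ := Real.rpow_le_rpow (by positivity) hxn hθ
      _ = x ^ (-θ) * (u / v) ^ θ := by
          rw [Real.mul_rpow (by positivity) (by positivity),
            Real.rpow_neg hx0.le, ← Real.inv_rpow hx0.le]
          ring
  calc w u ≤ w (v * x ^ n) := hmono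
    _ ≤ x ^ (θ * n) * w v := hchain
    _ ≤ x ^ (-θ) * (u / v) ^ θ * w v := by
        have := hwpos v hv
        nlinarith


private lemma rpow_comp_div {u m v β : ℝ} (hu : 0 < u) (hm : 0 < m) (hv : 0 < v) :
    (v / m) ^ β * (m / u) ^ β = (v / u) ^ β := by
  rw [← Real.mul_rpow (by positivity) (by positivity)]
  congr 1
  field_simp

private lemma potter_enlarge {w : ℝ → ℝ} {β C K u v : ℝ}
    (h : w v ≤ C * (v / u) ^ β * w u) (hCK : C ≤ K)
    (hwu : 0 ≤ w u) (hr : 0 ≤ (v / u) ^ β) :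
    w v ≤ K * (v / u) ^ β * w u := by
  have h2 := mul_nonneg hr hwu
  nlinarith

private lemma one_le_ratio_rpow {u v β : ℝ} (hu : 0 < u) (huv : u ≤ v) (hβ : 0 ≤ β) :
    1 ≤ (v / u) ^ β := by
  calc (1:ℝ) = 1 ^ β := (Real.one_rpow β).symm
    _ ≤ (v / u) ^ β := Real.rpow_le_rpow zero_le_one ((one_le_div hu).mpr huv) hβ

/-- composition of two Potter-type bounds (upper form). -/
private lemma potter_comp_up {w : ℝ → ℝ} {β C1 C2 u m v : ℝ}
    (hu : 0 < u) (hm : 0 < m) (hv : 0 < v) (hC2 : 0 ≤ C2) (hwu : 0 ≤ w u)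
    (h1 : w m ≤ C1 * (m / u) ^ β * w u) (h2 : w v ≤ C2 * (v / m) ^ β * w m) :
    w v ≤ C2 * C1 * (v / u) ^ β * w u := by
  have hr2 : 0 ≤ (v / m) ^ β := Real.rpow_nonneg (by positivity) _
  calc w v ≤ C2 * (v / m) ^ β * w m := h2
    _ ≤ C2 * (v / m) ^ β * (C1 * (m / u) ^ β * w u) :=
        mul_le_mul_of_nonneg_left h1 (mul_nonneg hC2 hr2)
    _ = C2 * C1 * ((v / m) ^ β * (m / u) ^ β) * w u := by ring
    _ = C2 * C1 * (v / u) ^ β * w u := by rw [rpow_comp_div hu hm hv]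

/-- Global upper Potter bound. -/
private lemma potter_global_up (w : ℝ → ℝ)
    (hw : ∀ a b : ℝ, 0 < a → a ≤ b → w a ≤ w b)
    (hwpos : ∀ r : ℝ, 0 < r → 0 < w r)
    (β : ℝ) (hβ : 0 ≤ β)
    (x1 x2 ε1 E2 : ℝ) (hx1 : 1 < x1) (hx2 : 1 < x2) (hε1 : 0 < ε1) (hE2 : 0 < E2)
    (hstep0 : ∀ ε, 0 < ε → ε < ε1 → w (ε * x1) ≤ x1 ^ β * w ε)
    (hstepI : ∀ ε, E2 ≤ ε → w (ε * x2) ≤ x2 ^ β * w ε) :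
    ∃ K : ℝ, 1 ≤ K ∧ ∀ u v : ℝ, 0 < u → u ≤ v → w v ≤ K * (v / u) ^ β * w u := by
  set a := ε1 / 2 with ha
  set b := max E2 ε1 with hb
  have ha0 : 0 < a := by positivity
  have hab : a ≤ b := le_trans (by rw [ha]; linarith) (le_max_right _ _)
  have hb0 : 0 < b := lt_of_lt_of_le ha0 hab
  have haε1 : a < ε1 := by rw [ha]; linarith
  have hbE2 : E2 ≤ b := le_max_left _ _
  set M := w b / w a with hM
  have hwa := hwpos a ha0
  have hwb := hwpos b hb0
  have hM1 : 1 ≤ M := (one_le_div hwa).mpr (hw a b ha0 hab)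
  have hM0 : 0 < M := lt_of_lt_of_le one_pos hM1
  have hx1β : 1 ≤ x1 ^ β := Real.one_le_rpow hx1.le hβ
  have hx2β : 1 ≤ x2 ^ β := Real.one_le_rpow hx2.le hβ
  have hx1β0 : 0 < x1 ^ β := lt_of_lt_of_le one_pos hx1β
  have hx2β0 : 0 < x2 ^ β := lt_of_lt_of_le one_pos hx2β
  set K := x1 ^ β * x2 ^ β * M with hK
  have h2M : 1 ≤ x2 ^ β * M := by nlinarith
  have h1M : 1 ≤ x1 ^ β * M := by nlinarith
  have h12 : 1 ≤ x1 ^ β * x2 ^ β := by nlinarith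
  have hKx1 : x1 ^ β ≤ K := by
    rw [hK]; nlinarith [mul_le_mul_of_nonneg_left h2M hx1β0.le]
  have hKx2 : x2 ^ β ≤ K := by
    rw [hK]; nlinarith [mul_le_mul_of_nonneg_left h1M hx2β0.le]
  have hKM : M ≤ K := by
    rw [hK]; nlinarith [mul_le_mul_of_nonneg_left h12 hM0.le]
  have hKMx1 : M * x1 ^ β ≤ K := by
    rw [hK]; nlinarith [mul_le_mul_of_nonneg_left hx2β (by positivity : (0:ℝ) ≤ M * x1 ^ β)]
  have hKMx2 : x2 ^ β * M ≤ K := by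
    rw [hK]; nlinarith [mul_le_mul_of_nonneg_left hx1β (by positivity : (0:ℝ) ≤ x2 ^ β * M)]
  have hKfull : x2 ^ β * (M * x1 ^ β) ≤ K := le_of_eq (by rw [hK]; ring)
  have hK1 : 1 ≤ K := le_trans hx1β hKx1
  refine ⟨K, hK1, ?_⟩
  have piece0 : ∀ u v : ℝ, 0 < u → u ≤ v → v ≤ a →
      w v ≤ x1 ^ β * (v / u) ^ β * w u := by
    intro u v hu huv hva
    exact potter_up w hw hwpos x1 β hx1 hβ u v hu huv
      (fun ε hε1' hε2 => hstep0 ε (lt_of_lt_of_le hu hε1') (lt_of_le_of_lt (le_trans hε2 hva) haε1))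
  have pieceI : ∀ u v : ℝ, b ≤ u → u ≤ v →
      w v ≤ x2 ^ β * (v / u) ^ β * w u := by
    intro u v hbu huv
    exact potter_up w hw hwpos x2 β hx2 hβ u v (lt_of_lt_of_le hb0 hbu) huv
      (fun ε hε1' _ => hstepI ε (le_trans hbE2 (le_trans hbu hε1')))
  have mid : ∀ u v : ℝ, a ≤ u → u ≤ v → v ≤ b →
      w v ≤ M * (v / u) ^ β * w u := by
    intro u v hau huv hvb
    have hu0 : 0 < u := lt_of_lt_of_le ha0 hau
    have h1 : w v ≤ w b := hw v b (lt_of_lt_of_le hu0 huv) hvb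
    have h2 : w a ≤ w u := hw a u ha0 hau
    have h3 : 1 ≤ (v / u) ^ β := one_le_ratio_rpow hu0 huv hβ
    have hwu := hwpos u hu0
    have h5 : w v ≤ M * w u := by
      rw [hM, div_mul_eq_mul_div, le_div_iff₀ hwa]
      nlinarith
    have h6 : 0 ≤ M * w u := by positivity
    calc w v ≤ M * w u := h5
      _ = M * w u * 1 := (mul_one _).symm
      _ ≤ M * w u * ((v / u) ^ β) := mul_le_mul_of_nonneg_left h3 h6
      _ = M * (v / u) ^ β * w u := by ring
  intro u v hu huv
  have hv : 0 < v := lt_of_lt_of_le hu huv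
  have hwu := hwpos u hu
  have hrβ : (0:ℝ) ≤ (v / u) ^ β := Real.rpow_nonneg (by positivity) β
  rcases le_total v a with hva | hav
  · exact potter_enlarge (piece0 u v hu huv hva) hKx1 hwu.le hrβ
  rcases le_total b u with hbu | hub
  · exact potter_enlarge (pieceI u v hbu huv) hKx2 hwu.le hrβ
  rcases le_total u a with hua | hau
  · rcases le_total v b with hvb | hbv
    · exact potter_enlarge
        (potter_comp_up hu ha0 hv hM0.le hwu.le (piece0 u a hu hua le_rfl)
          (mid a v le_rfl hav hvb)) hKMx1 hwu.le hrβ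
    · have hc1 : w b ≤ M * x1 ^ β * (b / u) ^ β * w u :=
        potter_comp_up hu ha0 hb0 hM0.le hwu.le (piece0 u a hu hua le_rfl)
          (mid a b le_rfl hab le_rfl)
      exact potter_enlarge
        (potter_comp_up hu hb0 hv hx2β0.le hwu.le hc1 (pieceI b v le_rfl hbv))
        hKfull hwu.le hrβ
  · rcases le_total v b with hvb | hbv
    · exact potter_enlarge (mid u v hau huv hvb) hKM hwu.le hrβ
    · exact potter_enlarge
        (potter_comp_up hu hb0 hv hx2β0.le hwu.le (mid u b hau hub le_rfl)
          (pieceI b v le_rfl hbv)) hKMx2 hwu.le hrβ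


private lemma potter_enlarge_dn {w : ℝ → ℝ} {γ C K u v : ℝ}
    (h : w u ≤ C * (u / v) ^ γ * w v) (hCK : C ≤ K)
    (hwv : 0 ≤ w v) (hr : 0 ≤ (u / v) ^ γ) :
    w u ≤ K * (u / v) ^ γ * w v := by
  have h2 := mul_nonneg hr hwv
  nlinarith

/-- composition of two Potter-type bounds (lower form):
`w m ≤ C1 (m/v)^γ w v` (for m ≤ v) and `w u ≤ C2 (u/m)^γ w m` give
`w u ≤ C2 C1 (u/v)^γ w v`. -/
private lemma potter_comp_dn {w : ℝ → ℝ} {γ C1 C2 u m v : ℝ}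
    (hu : 0 < u) (hm : 0 < m) (hv : 0 < v) (hC2 : 0 ≤ C2)
    (h1 : w m ≤ C1 * (m / v) ^ γ * w v) (h2 : w u ≤ C2 * (u / m) ^ γ * w m) :
    w u ≤ C2 * C1 * (u / v) ^ γ * w v := by
  have hr2 : 0 ≤ (u / m) ^ γ := Real.rpow_nonneg (by positivity) _
  calc w u ≤ C2 * (u / m) ^ γ * w m := h2
    _ ≤ C2 * (u / m) ^ γ * (C1 * (m / v) ^ γ * w v) :=
        mul_le_mul_of_nonneg_left h1 (mul_nonneg hC2 hr2)
    _ = C2 * C1 * ((u / m) ^ γ * (m / v) ^ γ) * w v := by ring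
    _ = C2 * C1 * (u / v) ^ γ * w v := by
        rw [rpow_comp_div hv hm hu]

/-- Global lower Potter bound (stated as an upper bound on `w u / w v`, `u ≤ v`). -/
private lemma potter_global_dn (w : ℝ → ℝ)
    (hw : ∀ a b : ℝ, 0 < a → a ≤ b → w a ≤ w b)
    (hwpos : ∀ r : ℝ, 0 < r → 0 < w r)
    (γ : ℝ) (hγ : 0 ≤ γ)
    (y1 y2 ε1 E2 : ℝ) (hy10 : 0 < y1) (hy1 : y1 < 1) (hy20 : 0 < y2) (hy2 : y2 < 1)
    (hε1 : 0 < ε1) (hE2 : 0 < E2)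
    (hstep0 : ∀ ε, 0 < ε → ε < ε1 → w (ε * y1) ≤ y1 ^ γ * w ε)
    (hstepI : ∀ ε, E2 ≤ ε → w (ε * y2) ≤ y2 ^ γ * w ε) :
    ∃ K : ℝ, 1 ≤ K ∧ ∀ u v : ℝ, 0 < u → u ≤ v → w u ≤ K * (u / v) ^ γ * w v := by
  set a := ε1 / 2 with ha
  set b := max E2 ε1 with hb
  have ha0 : 0 < a := by positivity
  have hab : a ≤ b := le_trans (by rw [ha]; linarith) (le_max_right _ _)
  have hb0 : 0 < b := lt_of_lt_of_le ha0 hab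
  have haε1 : a < ε1 := by rw [ha]; linarith
  have hbE2 : E2 ≤ b := le_max_left _ _
  set M := (b / a) ^ γ with hM
  have hM1 : 1 ≤ M := by
    rw [hM]
    calc (1:ℝ) = 1 ^ γ := (Real.one_rpow γ).symm
      _ ≤ (b / a) ^ γ := Real.rpow_le_rpow zero_le_one ((one_le_div ha0).mpr hab) hγ
  have hM0 : 0 < M := lt_of_lt_of_le one_pos hM1
  have hy1γ : 1 ≤ y1 ^ (-γ) := by
    rw [Real.rpow_neg hy10.le]
    exact (one_le_inv₀ (Real.rpow_pos_of_pos hy10 γ)).mpr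
      (Real.rpow_le_one hy10.le hy1.le hγ)
  have hy2γ : 1 ≤ y2 ^ (-γ) := by
    rw [Real.rpow_neg hy20.le]
    exact (one_le_inv₀ (Real.rpow_pos_of_pos hy20 γ)).mpr
      (Real.rpow_le_one hy20.le hy2.le hγ)
  have hy1γ0 : 0 < y1 ^ (-γ) := lt_of_lt_of_le one_pos hy1γ
  have hy2γ0 : 0 < y2 ^ (-γ) := lt_of_lt_of_le one_pos hy2γ
  set K := y1 ^ (-γ) * y2 ^ (-γ) * M with hK
  have h2M : 1 ≤ y2 ^ (-γ) * M := by nlinarith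
  have h1M : 1 ≤ y1 ^ (-γ) * M := by nlinarith
  have h12 : 1 ≤ y1 ^ (-γ) * y2 ^ (-γ) := by nlinarith
  have hKy1 : y1 ^ (-γ) ≤ K := by
    rw [hK]; nlinarith [mul_le_mul_of_nonneg_left h2M hy1γ0.le]
  have hKy2 : y2 ^ (-γ) ≤ K := by
    rw [hK]; nlinarith [mul_le_mul_of_nonneg_left h1M hy2γ0.le]
  have hKM : M ≤ K := by
    rw [hK]; nlinarith [mul_le_mul_of_nonneg_left h12 hM0.le]
  have hKMy1 : M * y1 ^ (-γ) ≤ K := by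
    rw [hK]; nlinarith [mul_le_mul_of_nonneg_left hy2γ (by positivity : (0:ℝ) ≤ M * y1 ^ (-γ))]
  have hKMy2 : y2 ^ (-γ) * M ≤ K := by
    rw [hK]; nlinarith [mul_le_mul_of_nonneg_left hy1γ (by positivity : (0:ℝ) ≤ y2 ^ (-γ) * M)]
  have hKfull : y2 ^ (-γ) * (M * y1 ^ (-γ)) ≤ K := le_of_eq (by rw [hK]; ring)
  have hKc1 : y1 ^ (-γ) * M ≤ K := by
    rw [hK]; nlinarith [mul_le_mul_of_nonneg_left hy2γ (by positivity : (0:ℝ) ≤ y1 ^ (-γ) * M)]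
  have hKc2 : y1 ^ (-γ) * (M * y2 ^ (-γ)) ≤ K := le_of_eq (by rw [hK]; ring)
  have hKc3 : M * y2 ^ (-γ) ≤ K := by
    rw [hK]; nlinarith [mul_le_mul_of_nonneg_left hy1γ (by positivity : (0:ℝ) ≤ M * y2 ^ (-γ))]
  have hK1 : 1 ≤ K := le_trans hy1γ hKy1
  refine ⟨K, hK1, ?_⟩
  have piece0 : ∀ u v : ℝ, 0 < u → u ≤ v → v ≤ a →
      w u ≤ y1 ^ (-γ) * (u / v) ^ γ * w v := by
    intro u v hu huv hva
    exact potter_dn w hw hwpos y1 γ hy10 hy1 hγ u v hu huv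
      (fun ε hε1' hε2 => hstep0 ε (lt_of_lt_of_le hu hε1') (lt_of_le_of_lt (le_trans hε2 hva) haε1))
  have pieceI : ∀ u v : ℝ, b ≤ u → u ≤ v →
      w u ≤ y2 ^ (-γ) * (u / v) ^ γ * w v := by
    intro u v hbu huv
    exact potter_dn w hw hwpos y2 γ hy20 hy2 hγ u v (lt_of_lt_of_le hb0 hbu) huv
      (fun ε hε1' _ => hstepI ε (le_trans hbE2 (le_trans hbu hε1')))
  have mid : ∀ u v : ℝ, a ≤ u → u ≤ v → v ≤ b →
      w u ≤ M * (u / v) ^ γ * w v := by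
    intro u v hau huv hvb
    have hu0 : 0 < u := lt_of_lt_of_le ha0 hau
    have hv0 : 0 < v := lt_of_lt_of_le hu0 huv
    have h1 : w u ≤ w v := hw u v hu0 huv
    have h3 : 1 ≤ M * (u / v) ^ γ := by
      have : (a / b) ≤ u / v := by
        rw [div_le_div_iff₀ hb0 hv0]
        nlinarith
      have h4 : (a / b) ^ γ ≤ (u / v) ^ γ :=
        Real.rpow_le_rpow (by positivity) this hγ
      have h5 : M * (a / b) ^ γ = 1 := by
        rw [hM, ← Real.mul_rpow (by positivity) (by positivity)]
        rw [show b / a * (a / b) = 1 by field_simp]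
        exact Real.one_rpow γ
      nlinarith
    have hwv := hwpos v hv0
    nlinarith
  intro u v hu huv
  have hv : 0 < v := lt_of_lt_of_le hu huv
  have hwv := (hwpos v hv).le
  have hrγ : (0:ℝ) ≤ (u / v) ^ γ := Real.rpow_nonneg (by positivity) γ
  rcases le_total v a with hva | hav
  · exact potter_enlarge_dn (piece0 u v hu huv hva) hKy1 hwv hrγ
  rcases le_total b u with hbu | hub
  · exact potter_enlarge_dn (pieceI u v hbu huv) hKy2 hwv hrγ
  rcases le_total u a with hua | hau
  · rcases le_total v b with hvb | hbv
    · exact potter_enlarge_dn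
        (potter_comp_dn hu ha0 hv hy1γ0.le (mid a v le_rfl hav hvb)
          (piece0 u a hu hua le_rfl)) hKc1 hwv hrγ
    · have hc1 : w a ≤ M * y2 ^ (-γ) * (a / v) ^ γ * w v :=
        potter_comp_dn ha0 hb0 hv hM0.le (pieceI b v le_rfl hbv)
          (mid a b le_rfl hab le_rfl)
      exact potter_enlarge_dn
        (potter_comp_dn hu ha0 hv hy1γ0.le hc1 (piece0 u a hu hua le_rfl))
        hKc2 hwv hrγ
  · rcases le_total v b with hvb | hbv
    · exact potter_enlarge_dn (mid u v hau huv hvb) hKM hwv hrγ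
    · exact potter_enlarge_dn
        (potter_comp_dn hu hb0 hv hM0.le (pieceI b v le_rfl hbv)
          (mid u b hau hub le_rfl)) hKc3 hwv hrγ


private lemma exists_large_ratio_bound {r : ℝ → ℝ} {q β : ℝ}
    (hq : Tendsto (fun ε => Real.log (r ε) / Real.log ε) atTop (𝓝 q)) (hqβ : q < β) :
    ∃ x : ℝ, 1 < x ∧ r x < x ^ β := by
  have h1 : ∀ᶠ ε in atTop, Real.log (r ε) / Real.log ε < β :=
    hq.eventually_lt_const hqβ
  obtain ⟨x, hx1, hx2⟩ := (eventually_gt_atTop (1:ℝ)).and h1 |>.exists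
  refine ⟨x, hx1, ?_⟩
  have hx0 : (0:ℝ) < x := lt_trans one_pos hx1
  by_cases hr0 : 0 < r x
  · have hlx : 0 < Real.log x := Real.log_pos hx1
    have : Real.log (r x) < β * Real.log x := by
      rw [div_lt_iff₀ hlx] at hx2; linarith
    calc r x = Real.exp (Real.log (r x)) := (Real.exp_log hr0).symm
      _ < Real.exp (β * Real.log x) := Real.exp_lt_exp.mpr this
      _ = x ^ β := by
          rw [← Real.log_rpow hx0, Real.exp_log (Real.rpow_pos_of_pos hx0 _)]
  · push_neg at hr0
    exact lt_of_le_of_lt hr0 (Real.rpow_pos_of_pos hx0 β)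

private lemma exists_small_ratio_bound {r : ℝ → ℝ} {p γ : ℝ}
    (hp : Tendsto (fun ε => Real.log (r ε) / Real.log ε) (𝓝[>] (0:ℝ)) (𝓝 p)) (hγp : γ < p) :
    ∃ x : ℝ, 0 < x ∧ x < 1 ∧ r x < x ^ γ := by
  have h1 : ∀ᶠ ε in 𝓝[>] (0:ℝ), γ < Real.log (r ε) / Real.log ε :=
    hp.eventually_const_lt hγp
  have h2 : ∀ᶠ ε in 𝓝[>] (0:ℝ), ε < 1 :=
    eventually_nhdsWithin_of_eventually_nhds (Filter.Tendsto.eventually_lt_const one_pos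
      (Continuous.tendsto continuous_id 0) |>.mono (fun x h => h))
  have h3 : ∀ᶠ ε in 𝓝[>] (0:ℝ), 0 < ε := eventually_mem_nhdsWithin
  obtain ⟨x, ⟨hγx, hx1⟩, hx0⟩ := ((h1.and h2).and h3).exists
  refine ⟨x, hx0, hx1, ?_⟩
  by_cases hr0 : 0 < r x
  · have hlx : Real.log x < 0 := Real.log_neg hx0 hx1
    have : Real.log (r x) < γ * Real.log x := by
      rw [lt_div_iff_of_neg hlx] at hγx; linarith
    calc r x = Real.exp (Real.log (r x)) := (Real.exp_log hr0).symm
      _ < Real.exp (γ * Real.log x) := Real.exp_lt_exp.mpr this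
      _ = x ^ γ := by
          rw [← Real.log_rpow hx0, Real.exp_log (Real.rpow_pos_of_pos hx0 _)]
  · push_neg at hr0
    exact lt_of_le_of_lt hr0 (Real.rpow_pos_of_pos hx0 γ)



private lemma dyadic_floor {c : ℝ} (hc : 1 ≤ c) : ∃ n : ℕ, 2 ^ n ≤ c ∧ c < 2 ^ (n + 1) := by
  have hc0 : 0 < c := lt_of_lt_of_le one_pos hc
  have hl2 : 0 < Real.log 2 := Real.log_pos one_lt_two
  have ht0 : 0 ≤ Real.log c := Real.log_nonneg hc
  refine ⟨⌊Real.log c / Real.log 2⌋₊, ?_, ?_⟩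
  · have h1 : (⌊Real.log c / Real.log 2⌋₊ : ℝ) * Real.log 2 ≤ Real.log c :=
      (le_div_iff₀ hl2).mp (Nat.floor_le (div_nonneg ht0 hl2.le))
    calc (2:ℝ) ^ ⌊Real.log c / Real.log 2⌋₊
        = Real.exp ((⌊Real.log c / Real.log 2⌋₊ : ℝ) * Real.log 2) := by
          rw [← Real.log_rpow two_pos, Real.exp_log (Real.rpow_pos_of_pos two_pos _),
            Real.rpow_natCast]
      _ ≤ Real.exp (Real.log c) := Real.exp_le_exp.mpr h1
      _ = c := Real.exp_log hc0
  · have h2 : Real.log c < ((⌊Real.log c / Real.log 2⌋₊ : ℝ) + 1) * Real.log 2 := by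
      have := Nat.lt_floor_add_one (Real.log c / Real.log 2)
      rw [div_lt_iff₀ hl2] at this; linarith
    calc c = Real.exp (Real.log c) := (Real.exp_log hc0).symm
      _ < Real.exp (((⌊Real.log c / Real.log 2⌋₊ : ℝ) + 1) * Real.log 2) :=
          Real.exp_lt_exp.mpr h2
      _ = 2 ^ (⌊Real.log c / Real.log 2⌋₊ + 1) := by
          rw [← Real.log_rpow two_pos, Real.exp_log (Real.rpow_pos_of_pos two_pos _)]
          rw [show ((⌊Real.log c / Real.log 2⌋₊ : ℝ) + 1) = ((⌊Real.log c / Real.log 2⌋₊ + 1 : ℕ) : ℝ) by push_cast; ring, Real.rpow_natCast]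

private lemma dyadic_ceil {c : ℝ} (hc : 1 < c) : ∃ n : ℕ, 2 ^ n < c ∧ c ≤ 2 ^ (n + 1) := by
  obtain ⟨n, h1, h2⟩ := dyadic_floor hc.le
  rcases lt_or_eq_of_le h1 with h | h
  · exact ⟨n, h, h2.le⟩
  · match n, h with
    | 0, h => exact absurd h.symm (by norm_num; exact hc.ne')
    | (m+1), h =>
      refine ⟨m, ?_, le_of_eq h.symm⟩
      rw [← h, pow_succ]
      nlinarith [pow_pos (two_pos (α := ℝ)) m]


/-- Small-ball moment bound via dyadic shells. -/
private lemma moment_small {E : Type*} [NormedAddCommGroup E] [MeasurableSpace E] [BorelSpace E]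
    (ν : Measure E) (hν0 : ν {0} = 0)
    (δ : ℝ → ℝ) (hδdef : ∀ r, δ r = (ν {x : E | r < ‖x‖}).toReal)
    (hfin : ∀ r, 0 < r → ν {x : E | r < ‖x‖} < ⊤)
    (R α β K wR : ℝ) (hR : 0 < R) (hα : 0 < α) (hβ0 : 0 ≤ β) (hβα : β < α)
    (hK : 0 < K) (hwR : 0 < wR)
    (hbound : ∀ u, 0 < u → u ≤ R → wR * δ u ≤ K * (R / u) ^ β) :
    wR * ∫ y in {y : E | ‖y‖ ≤ R}, (‖y‖ / R) ^ α ∂ν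
      ≤ K * 2 ^ β * (1 - 2 ^ (β - α))⁻¹ := by
  have hρ : (0:ℝ) < 2 ^ (β - α) := Real.rpow_pos_of_pos two_pos _
  have hρ1 : (2:ℝ) ^ (β - α) < 1 := by
    rw [show (1:ℝ) = 2 ^ (0:ℝ) by rw [Real.rpow_zero]]
    exact Real.rpow_lt_rpow_left_iff one_lt_two |>.mpr (by linarith)
  set ρ := (2:ℝ) ^ (β - α) with hρdef
  set c := K * 2 ^ β / wR with hc
  have hc0 : 0 < c := by
    apply div_pos (mul_pos hK (Real.rpow_pos_of_pos two_pos β)) hwR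
  -- the shells
  set A : ℕ → Set E := fun n => {y : E | R / 2 ^ (n+1) < ‖y‖ ∧ ‖y‖ ≤ R / 2 ^ n} with hA
  have hcov : {y : E | ‖y‖ ≤ R} ⊆ {0} ∪ ⋃ n, A n := by
    intro y hy
    rcases eq_or_ne y 0 with h | h
    · exact Or.inl h
    · right
      have hy0 : 0 < ‖y‖ := norm_pos_iff.mpr h
      have h1 : (1:ℝ) ≤ R / ‖y‖ := (one_le_div hy0).mpr hy
      obtain ⟨n, hn1, hn2⟩ := dyadic_floor h1
      refine mem_iUnion.mpr ⟨n, ?_, ?_⟩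
      · rw [div_lt_iff₀ (pow_pos two_pos _)]
        rw [div_lt_iff₀ hy0] at hn2
        linarith
      · rw [le_div_iff₀ (pow_pos two_pos _)]
        rw [le_div_iff₀ hy0] at hn1
        linarith
  -- nonnegativity and measurability of the integrand
  have hfc : Continuous (fun y : E => (‖y‖ / R) ^ α) := by
    apply Continuous.rpow_const (continuous_norm.div_const R)
    intro y; right; exact hα.le
  have hfnn : ∀ y : E, 0 ≤ (‖y‖ / R) ^ α := fun y => Real.rpow_nonneg (by positivity) α
  -- convert to lintegral
  rw [integral_eq_lintegral_of_nonneg_ae (Filter.Eventually.of_forall hfnn)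
    (hfc.aestronglyMeasurable)]
  -- bound the lintegral
  have hL : (∫⁻ y in {y : E | ‖y‖ ≤ R}, ENNReal.ofReal ((‖y‖ / R) ^ α) ∂ν)
      ≤ ENNReal.ofReal (c * (1 - ρ)⁻¹) := by
    have step1 : (∫⁻ y in {y : E | ‖y‖ ≤ R}, ENNReal.ofReal ((‖y‖ / R) ^ α) ∂ν)
        ≤ ∑' n : ℕ, ∫⁻ y in A n, ENNReal.ofReal ((‖y‖ / R) ^ α) ∂ν := by
      calc (∫⁻ y in {y : E | ‖y‖ ≤ R}, ENNReal.ofReal ((‖y‖ / R) ^ α) ∂ν)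
          ≤ ∫⁻ y in {(0:E)} ∪ ⋃ n, A n, ENNReal.ofReal ((‖y‖ / R) ^ α) ∂ν :=
            lintegral_mono_set hcov
        _ ≤ (∫⁻ y in {(0:E)}, ENNReal.ofReal ((‖y‖ / R) ^ α) ∂ν)
            + ∫⁻ y in ⋃ n, A n, ENNReal.ofReal ((‖y‖ / R) ^ α) ∂ν :=
            lintegral_union_le _ _ _
        _ = ∫⁻ y in ⋃ n, A n, ENNReal.ofReal ((‖y‖ / R) ^ α) ∂ν := by
            rw [Measure.restrict_eq_zero.mpr hν0, lintegral_zero_measure, zero_add]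
        _ ≤ ∑' n : ℕ, ∫⁻ y in A n, ENNReal.ofReal ((‖y‖ / R) ^ α) ∂ν :=
            lintegral_iUnion_le _ _
    have step2 : ∀ n : ℕ, (∫⁻ y in A n, ENNReal.ofReal ((‖y‖ / R) ^ α) ∂ν)
        ≤ ENNReal.ofReal (c * ρ ^ n) := by
      intro n
      have hpow : (0:ℝ) < (2:ℝ) ^ n := pow_pos two_pos n
      have hterm : (∫⁻ y in A n, ENNReal.ofReal ((‖y‖ / R) ^ α) ∂ν)
          ≤ ENNReal.ofReal ((((2:ℝ) ^ n)⁻¹) ^ α) * ν (A n) := by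
        rw [← setLIntegral_const]
        apply setLIntegral_mono measurable_const
        intro y hy
        apply ENNReal.ofReal_le_ofReal
        apply Real.rpow_le_rpow (by positivity) _ hα.le
        rw [div_le_iff₀ hR]
        have := hy.2
        rw [div_eq_mul_inv, mul_comm] at this
        linarith
      have hν : ν (A n) ≤ ENNReal.ofReal (δ (R / 2 ^ (n+1))) := by
        have hsub : A n ⊆ {x : E | R / 2 ^ (n+1) < ‖x‖} := fun y hy => hy.1
        have h1 : ν (A n) ≤ ν {x : E | R / 2 ^ (n+1) < ‖x‖} := measure_mono hsub
        rw [hδdef, ENNReal.ofReal_toReal (hfin _ (by positivity)).ne]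
        exact h1
      have hreal : (((2:ℝ) ^ n)⁻¹) ^ α * δ (R / 2 ^ (n+1)) ≤ c * ρ ^ n := by
        have hu : (0:ℝ) < R / 2 ^ (n+1) := by positivity
        have huR : R / 2 ^ (n+1) ≤ R := div_le_self hR.le (one_le_pow₀ one_le_two)
        have hb := hbound _ hu huR
        have hRdiv : R / (R / 2 ^ (n+1)) = 2 ^ (n+1) := by field_simp
        rw [hRdiv] at hb
        -- δ ≥ 0
        have hδnn : 0 ≤ δ (R / 2 ^ (n+1)) := by rw [hδdef]; exact ENNReal.toReal_nonneg
        -- multiply hb by (2^n)⁻¹^α / wR ≥ 0 appropriately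
        -- wR * δ u ≤ K * (2^(n+1))^β  ⟹  δ u ≤ K * (2^(n+1))^β / wR
        have hδu : δ (R / 2 ^ (n+1)) ≤ K * ((2:ℝ) ^ (n+1) : ℝ) ^ β / wR := by
          rw [le_div_iff₀ hwR]; linarith
        have hmul : (((2:ℝ) ^ n)⁻¹) ^ α * δ (R / 2 ^ (n+1))
            ≤ (((2:ℝ) ^ n)⁻¹) ^ α * (K * ((2:ℝ) ^ (n+1) : ℝ) ^ β / wR) := by
          apply mul_le_mul_of_nonneg_left hδu (Real.rpow_nonneg (by positivity) α)
        refine le_trans hmul (le_of_eq ?_)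
        -- pure rpow algebra
        have h1 : (((2:ℝ) ^ n)⁻¹) ^ α = (2:ℝ) ^ (-((n:ℝ) * α)) := by
          rw [← Real.rpow_natCast 2 n, ← Real.rpow_neg two_pos.le,
            ← Real.rpow_mul two_pos.le, neg_mul]
        have h2 : (((2:ℝ) ^ (n+1) : ℝ)) ^ β = (2:ℝ) ^ (((n:ℝ) + 1) * β) := by
          rw [← Real.rpow_natCast 2 (n+1), ← Real.rpow_mul two_pos.le]
          push_cast; ring_nf
        have h3 : ρ ^ n = (2:ℝ) ^ ((β - α) * (n:ℝ)) := by
          rw [hρdef, ← Real.rpow_natCast ((2:ℝ) ^ (β - α)) n, ← Real.rpow_mul two_pos.le]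
        have h4 : (2:ℝ) ^ (-((n:ℝ) * α)) * (2:ℝ) ^ (((n:ℝ) + 1) * β)
            = (2:ℝ) ^ β * (2:ℝ) ^ ((β - α) * (n:ℝ)) := by
          rw [← Real.rpow_add two_pos, ← Real.rpow_add two_pos]
          congr 1; ring
        rw [h1, h2, h3, hc]
        calc (2:ℝ) ^ (-((n:ℝ) * α)) * (K * (2:ℝ) ^ (((n:ℝ) + 1) * β) / wR)
            = K * ((2:ℝ) ^ (-((n:ℝ) * α)) * (2:ℝ) ^ (((n:ℝ) + 1) * β)) / wR := by ring
          _ = K * ((2:ℝ) ^ β * (2:ℝ) ^ ((β - α) * (n:ℝ))) / wR := by rw [h4]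
          _ = K * 2 ^ β / wR * (2:ℝ) ^ ((β - α) * (n:ℝ)) := by ring
      calc (∫⁻ y in A n, ENNReal.ofReal ((‖y‖ / R) ^ α) ∂ν)
          ≤ ENNReal.ofReal ((((2:ℝ) ^ n)⁻¹) ^ α) * ν (A n) := hterm
        _ ≤ ENNReal.ofReal ((((2:ℝ) ^ n)⁻¹) ^ α) * ENNReal.ofReal (δ (R / 2 ^ (n+1))) :=
            mul_le_mul_right hν _
        _ = ENNReal.ofReal ((((2:ℝ) ^ n)⁻¹) ^ α * δ (R / 2 ^ (n+1))) := by
            rw [← ENNReal.ofReal_mul (Real.rpow_nonneg (by positivity) α)]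
        _ ≤ ENNReal.ofReal (c * ρ ^ n) := ENNReal.ofReal_le_ofReal hreal
    calc (∫⁻ y in {y : E | ‖y‖ ≤ R}, ENNReal.ofReal ((‖y‖ / R) ^ α) ∂ν)
        ≤ ∑' n : ℕ, ∫⁻ y in A n, ENNReal.ofReal ((‖y‖ / R) ^ α) ∂ν := step1
      _ ≤ ∑' n : ℕ, ENNReal.ofReal (c * ρ ^ n) := ENNReal.tsum_le_tsum step2
      _ = ∑' n : ℕ, ENNReal.ofReal c * ENNReal.ofReal ρ ^ n := by
          congr 1; funext n
          rw [ENNReal.ofReal_mul hc0.le, ENNReal.ofReal_pow hρ.le]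
      _ = ENNReal.ofReal c * (1 - ENNReal.ofReal ρ)⁻¹ := by
          rw [ENNReal.tsum_mul_left, ENNReal.tsum_geometric]
      _ = ENNReal.ofReal (c * (1 - ρ)⁻¹) := by
          rw [← ENNReal.ofReal_one, ← ENNReal.ofReal_sub _ hρ.le,
            ← ENNReal.ofReal_inv_of_pos (by linarith), ← ENNReal.ofReal_mul hc0.le]
  have hfinal : (∫⁻ y in {y : E | ‖y‖ ≤ R}, ENNReal.ofReal ((‖y‖ / R) ^ α) ∂ν).toReal
      ≤ c * (1 - ρ)⁻¹ :=
    ENNReal.toReal_le_of_le_ofReal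
      (mul_nonneg hc0.le (inv_nonneg.mpr (by linarith))) hL
  calc wR * (∫⁻ y in {y : E | ‖y‖ ≤ R}, ENNReal.ofReal ((‖y‖ / R) ^ α) ∂ν).toReal
      ≤ wR * (c * (1 - ρ)⁻¹) := mul_le_mul_of_nonneg_left hfinal hwR.le
    _ = K * 2 ^ β * (1 - ρ)⁻¹ := by
        rw [hc]; field_simp


/-- Tail moment bound via dyadic shells. -/
private lemma moment_large {E : Type*} [NormedAddCommGroup E] [MeasurableSpace E] [BorelSpace E]
    (ν : Measure E)
    (δ : ℝ → ℝ) (hδdef : ∀ r, δ r = (ν {x : E | r < ‖x‖}).toReal)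
    (hfin : ∀ r, 0 < r → ν {x : E | r < ‖x‖} < ⊤)
    (R α γ K wR : ℝ) (hR : 0 < R) (hα : 0 < α) (hαγ : α < γ)
    (hK : 0 < K) (hwR : 0 < wR)
    (hbound : ∀ v, R ≤ v → wR * δ v ≤ K * (R / v) ^ γ) :
    wR * ∫ y in {y : E | R < ‖y‖}, (‖y‖ / R) ^ α ∂ν
      ≤ K * 2 ^ α * (1 - 2 ^ (α - γ))⁻¹ := by
  have hρ : (0:ℝ) < 2 ^ (α - γ) := Real.rpow_pos_of_pos two_pos _
  have hρ1 : (2:ℝ) ^ (α - γ) < 1 := by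
    rw [show (1:ℝ) = 2 ^ (0:ℝ) by rw [Real.rpow_zero]]
    exact Real.rpow_lt_rpow_left_iff one_lt_two |>.mpr (by linarith)
  set ρ := (2:ℝ) ^ (α - γ) with hρdef
  set c := K * 2 ^ α / wR with hc
  have hc0 : 0 < c := div_pos (mul_pos hK (Real.rpow_pos_of_pos two_pos α)) hwR
  set B : ℕ → Set E := fun n => {y : E | R * 2 ^ n < ‖y‖ ∧ ‖y‖ ≤ R * 2 ^ (n+1)} with hB
  have hcov : {y : E | R < ‖y‖} ⊆ ⋃ n, B n := by
    intro y hy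
    have hy' : R < ‖y‖ := hy
    have h1 : (1:ℝ) < ‖y‖ / R := (one_lt_div hR).mpr hy'
    obtain ⟨n, hn1, hn2⟩ := dyadic_ceil h1
    refine mem_iUnion.mpr ⟨n, ?_, ?_⟩
    · rw [lt_div_iff₀ hR] at hn1; linarith [hn1]
    · rw [div_le_iff₀ hR] at hn2; linarith [hn2]
  have hfc : Continuous (fun y : E => (‖y‖ / R) ^ α) := by
    apply Continuous.rpow_const (continuous_norm.div_const R)
    intro y; right; exact hα.le
  have hfnn : ∀ y : E, 0 ≤ (‖y‖ / R) ^ α := fun y => Real.rpow_nonneg (by positivity) α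
  rw [integral_eq_lintegral_of_nonneg_ae (Filter.Eventually.of_forall hfnn)
    (hfc.aestronglyMeasurable)]
  have hL : (∫⁻ y in {y : E | R < ‖y‖}, ENNReal.ofReal ((‖y‖ / R) ^ α) ∂ν)
      ≤ ENNReal.ofReal (c * (1 - ρ)⁻¹) := by
    have step2 : ∀ n : ℕ, (∫⁻ y in B n, ENNReal.ofReal ((‖y‖ / R) ^ α) ∂ν)
        ≤ ENNReal.ofReal (c * ρ ^ n) := by
      intro n
      have hterm : (∫⁻ y in B n, ENNReal.ofReal ((‖y‖ / R) ^ α) ∂ν)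
          ≤ ENNReal.ofReal (((2:ℝ) ^ (n+1)) ^ α) * ν (B n) := by
        rw [← setLIntegral_const]
        apply setLIntegral_mono measurable_const
        intro y hy
        apply ENNReal.ofReal_le_ofReal
        apply Real.rpow_le_rpow (by positivity) _ hα.le
        rw [div_le_iff₀ hR]
        have := hy.2
        linarith
      have hν : ν (B n) ≤ ENNReal.ofReal (δ (R * 2 ^ n)) := by
        have h1 : ν (B n) ≤ ν {x : E | R * 2 ^ n < ‖x‖} :=
          measure_mono (fun y hy => hy.1)
        rw [hδdef, ENNReal.ofReal_toReal (hfin _ (by positivity)).ne]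
        exact h1
      have hreal : ((2:ℝ) ^ (n+1)) ^ α * δ (R * 2 ^ n) ≤ c * ρ ^ n := by
        have hvR : R ≤ R * 2 ^ n := le_mul_of_one_le_right hR.le (one_le_pow₀ one_le_two)
        have hb := hbound _ hvR
        have hRdiv : R / (R * 2 ^ n) = ((2:ℝ) ^ n)⁻¹ := by
          field_simp
        rw [hRdiv] at hb
        have hδv : δ (R * 2 ^ n) ≤ K * (((2:ℝ) ^ n)⁻¹) ^ γ / wR := by
          rw [le_div_iff₀ hwR]; linarith
        have hmul : ((2:ℝ) ^ (n+1)) ^ α * δ (R * 2 ^ n)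
            ≤ ((2:ℝ) ^ (n+1)) ^ α * (K * (((2:ℝ) ^ n)⁻¹) ^ γ / wR) :=
          mul_le_mul_of_nonneg_left hδv (Real.rpow_nonneg (by positivity) α)
        refine le_trans hmul (le_of_eq ?_)
        have h1 : (((2:ℝ) ^ n)⁻¹) ^ γ = (2:ℝ) ^ (-((n:ℝ) * γ)) := by
          rw [← Real.rpow_natCast 2 n, ← Real.rpow_neg two_pos.le,
            ← Real.rpow_mul two_pos.le, neg_mul]
        have h2 : (((2:ℝ) ^ (n+1) : ℝ)) ^ α = (2:ℝ) ^ (((n:ℝ) + 1) * α) := by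
          rw [← Real.rpow_natCast 2 (n+1), ← Real.rpow_mul two_pos.le]
          push_cast; ring_nf
        have h3 : ρ ^ n = (2:ℝ) ^ ((α - γ) * (n:ℝ)) := by
          rw [hρdef, ← Real.rpow_natCast ((2:ℝ) ^ (α - γ)) n, ← Real.rpow_mul two_pos.le]
        have h4 : (2:ℝ) ^ (((n:ℝ) + 1) * α) * (2:ℝ) ^ (-((n:ℝ) * γ))
            = (2:ℝ) ^ α * (2:ℝ) ^ ((α - γ) * (n:ℝ)) := by
          rw [← Real.rpow_add two_pos, ← Real.rpow_add two_pos]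
          congr 1; ring
        rw [h1, h2, h3, hc]
        calc (2:ℝ) ^ (((n:ℝ) + 1) * α) * (K * (2:ℝ) ^ (-((n:ℝ) * γ)) / wR)
            = K * ((2:ℝ) ^ (((n:ℝ) + 1) * α) * (2:ℝ) ^ (-((n:ℝ) * γ))) / wR := by ring
          _ = K * ((2:ℝ) ^ α * (2:ℝ) ^ ((α - γ) * (n:ℝ))) / wR := by rw [h4]
          _ = K * 2 ^ α / wR * (2:ℝ) ^ ((α - γ) * (n:ℝ)) := by ring
      calc (∫⁻ y in B n, ENNReal.ofReal ((‖y‖ / R) ^ α) ∂ν)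
          ≤ ENNReal.ofReal (((2:ℝ) ^ (n+1)) ^ α) * ν (B n) := hterm
        _ ≤ ENNReal.ofReal (((2:ℝ) ^ (n+1)) ^ α) * ENNReal.ofReal (δ (R * 2 ^ n)) :=
            mul_le_mul_right hν _
        _ = ENNReal.ofReal (((2:ℝ) ^ (n+1)) ^ α * δ (R * 2 ^ n)) := by
            rw [← ENNReal.ofReal_mul (Real.rpow_nonneg (by positivity) α)]
        _ ≤ ENNReal.ofReal (c * ρ ^ n) := ENNReal.ofReal_le_ofReal hreal
    calc (∫⁻ y in {y : E | R < ‖y‖}, ENNReal.ofReal ((‖y‖ / R) ^ α) ∂ν)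
        ≤ ∫⁻ y in ⋃ n, B n, ENNReal.ofReal ((‖y‖ / R) ^ α) ∂ν := lintegral_mono_set hcov
      _ ≤ ∑' n : ℕ, ∫⁻ y in B n, ENNReal.ofReal ((‖y‖ / R) ^ α) ∂ν := lintegral_iUnion_le _ _
      _ ≤ ∑' n : ℕ, ENNReal.ofReal (c * ρ ^ n) := ENNReal.tsum_le_tsum step2
      _ = ∑' n : ℕ, ENNReal.ofReal c * ENNReal.ofReal ρ ^ n := by
          congr 1; funext n
          rw [ENNReal.ofReal_mul hc0.le, ENNReal.ofReal_pow hρ.le]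
      _ = ENNReal.ofReal c * (1 - ENNReal.ofReal ρ)⁻¹ := by
          rw [ENNReal.tsum_mul_left, ENNReal.tsum_geometric]
      _ = ENNReal.ofReal (c * (1 - ρ)⁻¹) := by
          rw [← ENNReal.ofReal_one, ← ENNReal.ofReal_sub _ hρ.le,
            ← ENNReal.ofReal_inv_of_pos (by linarith), ← ENNReal.ofReal_mul hc0.le]
  have hfinal : (∫⁻ y in {y : E | R < ‖y‖}, ENNReal.ofReal ((‖y‖ / R) ^ α) ∂ν).toReal
      ≤ c * (1 - ρ)⁻¹ :=
    ENNReal.toReal_le_of_le_ofReal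
      (mul_nonneg hc0.le (inv_nonneg.mpr (by linarith))) hL
  calc wR * (∫⁻ y in {y : E | R < ‖y‖}, ENNReal.ofReal ((‖y‖ / R) ^ α) ∂ν).toReal
      ≤ wR * (c * (1 - ρ)⁻¹) := mul_le_mul_of_nonneg_left hfinal hwR.le
    _ = K * 2 ^ α * (1 - ρ)⁻¹ := by
        rw [hc]; field_simp


/-- Uniform moment bound for the rescaled Lévy measures `ν̃_R(A) = w(R) ν(R A)`:
if `w = δ⁻¹` (with `δ` the continuous radial tail of `ν`) is O-RV at zero and
infinity with positive indices `p1,q1,p2,q2`, then for `α1 > max q1 q2` and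
`0 < α2 < min p1 p2` there is `C > 0` with
`∫_{|y|≤1} |y|^{α1} ν̃_R(dy) + ∫_{|y|>1} |y|^{α2} ν̃_R(dy) ≤ C` for all `R > 0`. -/
theorem stmt10 {d : ℕ}
    (ν : Measure (EuclideanSpace ℝ (Fin d)))
    (hlevy : (∫⁻ y, ENNReal.ofReal (min (‖y‖ ^ 2) 1) ∂ν) < ⊤)
    (hν0 : ν {0} = 0)
    (hfin : ∀ r > 0, ν {x : EuclideanSpace ℝ (Fin d) | r < ‖x‖} < ⊤)
    (δ w : ℝ → ℝ)
    (hδdef : ∀ r, δ r = (ν {x : EuclideanSpace ℝ (Fin d) | r < ‖x‖}).toReal)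
    (hwdef : ∀ r, w r = (δ r)⁻¹)
    (hδcont : ContinuousOn δ (Set.Ioi 0)) (hδpos : ∀ r > 0, 0 < δ r)
    (r1 r2 : ℝ → ℝ)
    (hr1 : ∀ x > 0, r1 x = Filter.limsup (fun ε => w (ε * x) / w ε) (𝓝[>] (0:ℝ)))
    (hr2 : ∀ x > 0, r2 x = Filter.limsup (fun ε => w (ε * x) / w ε) Filter.atTop)
    (hb1 : ∀ x > 0, Filter.IsBoundedUnder (· ≤ ·) (𝓝[>] (0:ℝ)) (fun ε => w (ε * x) / w ε))
    (hb2 : ∀ x > 0, Filter.IsBoundedUnder (· ≤ ·) Filter.atTop (fun ε => w (ε * x) / w ε))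
    (p1 q1 p2 q2 : ℝ)
    (hp1 : Filter.Tendsto (fun ε => Real.log (r1 ε) / Real.log ε) (𝓝[>] (0:ℝ)) (𝓝 p1))
    (hq1 : Filter.Tendsto (fun ε => Real.log (r1 ε) / Real.log ε) Filter.atTop (𝓝 q1))
    (hp2 : Filter.Tendsto (fun ε => Real.log (r2 ε) / Real.log ε) (𝓝[>] (0:ℝ)) (𝓝 p2))
    (hq2 : Filter.Tendsto (fun ε => Real.log (r2 ε) / Real.log ε) Filter.atTop (𝓝 q2))
    (hp1pos : 0 < p1) (hp2pos : 0 < p2) (hq1pos : 0 < q1) (hq2pos : 0 < q2)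
    (α1 α2 : ℝ) (hα1 : max q1 q2 < α1) (hα2 : 0 < α2) (hα2' : α2 < min p1 p2) :
    ∃ C > (0:ℝ), ∀ R > (0:ℝ),
      w R * (∫ y in {y : EuclideanSpace ℝ (Fin d) | ‖y‖ ≤ R}, (‖y‖ / R) ^ α1 ∂ν)
        + w R * (∫ y in {y : EuclideanSpace ℝ (Fin d) | R < ‖y‖}, (‖y‖ / R) ^ α2 ∂ν)
        ≤ C := by
  -- basic positivity / monotonicity of w
  have hwpos : ∀ r : ℝ, 0 < r → 0 < w r := by
    intro r hr; rw [hwdef]; exact inv_pos.mpr (hδpos r hr)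
  have hδanti : ∀ a b : ℝ, 0 < a → a ≤ b → δ b ≤ δ a := by
    intro a b ha hab
    rw [hδdef, hδdef]
    exact ENNReal.toReal_mono (hfin a ha).ne
      (measure_mono (fun x hx => lt_of_le_of_lt hab hx))
  have hwmono : ∀ a b : ℝ, 0 < a → a ≤ b → w a ≤ w b := by
    intro a b ha hab
    rw [hwdef, hwdef]
    exact inv_anti₀ (hδpos b (lt_of_lt_of_le ha hab)) (hδanti a b ha hab)
  -- choose β
  set β := (max q1 q2 + α1) / 2 with hβdef
  have hβq1 : q1 < β := by
    have := le_max_left q1 q2; rw [hβdef]; linarith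
  have hβq2 : q2 < β := by
    have := le_max_right q1 q2; rw [hβdef]; linarith
  have hβα1 : β < α1 := by rw [hβdef]; linarith
  have hβ0 : 0 < β := lt_trans hq1pos hβq1
  have hα1pos : 0 < α1 := lt_trans hq1pos (lt_trans hβq1 hβα1)
  -- extract steps for β
  obtain ⟨x2, hx2gt, hr2x2⟩ := exists_large_ratio_bound hq2 hβq2
  have hx2pos : (0:ℝ) < x2 := lt_trans one_pos hx2gt
  rw [hr2 x2 hx2pos] at hr2x2
  have hev2 := eventually_lt_of_limsup_lt hr2x2 (hb2 x2 hx2pos)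
  obtain ⟨E2', hE2'⟩ := Filter.eventually_atTop.mp hev2
  obtain ⟨x1, hx1gt, hr1x1⟩ := exists_large_ratio_bound hq1 hβq1
  have hx1pos : (0:ℝ) < x1 := lt_trans one_pos hx1gt
  rw [hr1 x1 hx1pos] at hr1x1
  have hev1 := eventually_lt_of_limsup_lt hr1x1 (hb1 x1 hx1pos)
  obtain ⟨ε1, hε1pos, hsub1⟩ := (nhdsGT_basis (0:ℝ)).eventually_iff.mp hev1
  obtain ⟨Kβ, hKβ1, hKβ⟩ := potter_global_up w hwmono hwpos β hβ0.le x1 x2 ε1 (max E2' 1)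
    hx1gt hx2gt hε1pos (lt_of_lt_of_le one_pos (le_max_right _ _))
    (by
      intro ε hε hεlt
      have h := hsub1 ⟨hε, hεlt⟩
      have hwε := hwpos ε hε
      rw [div_lt_iff₀ hwε] at h
      linarith)
    (by
      intro ε hε
      have hεpos : 0 < ε := lt_of_lt_of_le one_pos (le_trans (le_max_right _ _) hε)
      have h := hE2' ε (le_trans (le_max_left _ _) hε)
      have hwε := hwpos ε hεpos
      rw [div_lt_iff₀ hwε] at h
      linarith)
  -- choose γ
  set γ := (α2 + min p1 p2) / 2 with hγdef
  have hγp1 : γ < p1 := by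
    have := min_le_left p1 p2; rw [hγdef]; linarith
  have hγp2 : γ < p2 := by
    have := min_le_right p1 p2; rw [hγdef]; linarith
  have hα2γ : α2 < γ := by rw [hγdef]; linarith [lt_min_iff.mp (lt_of_lt_of_le hα2' (le_refl _))]
  have hγ0 : 0 < γ := lt_trans hα2 hα2γ
  -- extract steps for γ
  obtain ⟨y2, hy2pos, hy2lt, hr2y2⟩ := exists_small_ratio_bound hp2 hγp2
  rw [hr2 y2 hy2pos] at hr2y2
  have hev2' := eventually_lt_of_limsup_lt hr2y2 (hb2 y2 hy2pos)
  obtain ⟨F2', hF2'⟩ := Filter.eventually_atTop.mp hev2'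
  obtain ⟨y1, hy1pos, hy1lt, hr1y1⟩ := exists_small_ratio_bound hp1 hγp1
  rw [hr1 y1 hy1pos] at hr1y1
  have hev1' := eventually_lt_of_limsup_lt hr1y1 (hb1 y1 hy1pos)
  obtain ⟨ε1', hε1'pos, hsub1'⟩ := (nhdsGT_basis (0:ℝ)).eventually_iff.mp hev1'
  obtain ⟨Kγ, hKγ1, hKγ⟩ := potter_global_dn w hwmono hwpos γ hγ0.le y1 y2 ε1' (max F2' 1)
    hy1pos hy1lt hy2pos hy2lt hε1'pos (lt_of_lt_of_le one_pos (le_max_right _ _))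
    (by
      intro ε hε hεlt
      have h := hsub1' ⟨hε, hεlt⟩
      have hwε := hwpos ε hε
      rw [div_lt_iff₀ hwε] at h
      linarith)
    (by
      intro ε hε
      have hεpos : 0 < ε := lt_of_lt_of_le one_pos (le_trans (le_max_right _ _) hε)
      have h := hF2' ε (le_trans (le_max_left _ _) hε)
      have hwε := hwpos ε hεpos
      rw [div_lt_iff₀ hwε] at h
      linarith)
  -- the constant
  have hKβ0 : 0 < Kβ := lt_of_lt_of_le one_pos hKβ1
  have hKγ0 : 0 < Kγ := lt_of_lt_of_le one_pos hKγ1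
  have hρβ1 : (2:ℝ) ^ (β - α1) < 1 := by
    rw [show (1:ℝ) = 2 ^ (0:ℝ) by rw [Real.rpow_zero]]
    exact Real.rpow_lt_rpow_left_iff one_lt_two |>.mpr (by linarith)
  have hργ1 : (2:ℝ) ^ (α2 - γ) < 1 := by
    rw [show (1:ℝ) = 2 ^ (0:ℝ) by rw [Real.rpow_zero]]
    exact Real.rpow_lt_rpow_left_iff one_lt_two |>.mpr (by linarith)
  set C1 := Kβ * 2 ^ β * (1 - 2 ^ (β - α1))⁻¹ with hC1
  set C2 := Kγ * 2 ^ α2 * (1 - 2 ^ (α2 - γ))⁻¹ with hC2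
  have hC1pos : 0 < C1 := by
    rw [hC1]
    apply mul_pos (mul_pos hKβ0 (Real.rpow_pos_of_pos two_pos β))
    exact inv_pos.mpr (by linarith)
  have hC2pos : 0 < C2 := by
    rw [hC2]
    apply mul_pos (mul_pos hKγ0 (Real.rpow_pos_of_pos two_pos α2))
    exact inv_pos.mpr (by linarith)
  refine ⟨C1 + C2, by linarith, ?_⟩
  intro R hR
  have hwR := hwpos R hR
  -- bounds on w R * δ
  have hbound1 : ∀ u, 0 < u → u ≤ R → w R * δ u ≤ Kβ * (R / u) ^ β := by
    intro u hu huR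
    have h := hKβ u R hu huR
    have hδu : 0 < δ u := hδpos u hu
    calc w R * δ u ≤ (Kβ * (R / u) ^ β * w u) * δ u :=
          mul_le_mul_of_nonneg_right h hδu.le
      _ = Kβ * (R / u) ^ β * (w u * δ u) := by ring
      _ = Kβ * (R / u) ^ β := by
          rw [hwdef, inv_mul_cancel₀ hδu.ne', mul_one]
  have hbound2 : ∀ v, R ≤ v → w R * δ v ≤ Kγ * (R / v) ^ γ := by
    intro v hRv
    have hv : 0 < v := lt_of_lt_of_le hR hRv
    have h := hKγ R v hR hRv
    have hδv : 0 < δ v := hδpos v hv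
    calc w R * δ v ≤ (Kγ * (R / v) ^ γ * w v) * δ v :=
          mul_le_mul_of_nonneg_right h hδv.le
      _ = Kγ * (R / v) ^ γ * (w v * δ v) := by ring
      _ = Kγ * (R / v) ^ γ := by
          rw [hwdef, inv_mul_cancel₀ hδv.ne', mul_one]
  have part1 := moment_small ν hν0 δ hδdef (fun r hr => hfin r hr)
    R α1 β Kβ (w R) hR hα1pos hβ0.le hβα1 hKβ0 hwR hbound1
  have part2 := moment_large ν δ hδdef (fun r hr => hfin r hr)
    R α2 γ Kγ (w R) hR hα2 hα2γ hKγ0 hwR hbound2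
  exact add_le_add part1 part2
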